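/- For every nonempty weakly increasing sequence b = (b₁ ≤ ⋯ ≤ b_k) of positive integers and every i ≥ 1, the slide extractor satisfies D_i 𝔉_b = 𝔉_{(b₁,…,b_{k−1})} if i = b_k, and D_i 𝔉_b = 0 if i ≠ b_k. -/
import Mathlib


/-
Conventions: `Pol = MvPolynomial ℕ ℤ` with the Lean variable `X i` representing
the paper's variable `x_{i+1}` (0-indexed).  All operators carrying a paper index
`i ≥ 1` are represented by Lean operators indexed by `i : ℕ` (Lean `i` ↔ paper `i+1`),
and sequences of positive integers are represented by sequences of natural numbers
(entry `v` ↔ paper entry `v+1`).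
-/

open MvPolynomial
open scoped Classical

abbrev Pol := MvPolynomial ℕ ℤ

noncomputable section

/-- Interchange the variables `x_{i+1}` and `x_{i+2}` (paper indexing). -/
def swapVar (i : ℕ) (f : Pol) : Pol := rename (Equiv.swap i (i+1)) f

/-- Exact division: the unique `g` with `d * g = f` when it exists (`0` otherwise). -/
def exactDiv (d f : Pol) : Pol := if h : ∃ g : Pol, d * g = f then h.choose else 0

/-- The divided difference operator `∂_{i+1}` (paper indexing). -/
def ddiff (i : ℕ) (f : Pol) : Pol := exactDiv (X i - X (i+1)) (f - swapVar i f)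

/-- The Bergeron–Sottile operator `R_{i+1}` (paper indexing): `x_j ↦ x_j` for
`j < i+1`, `x_{i+1} ↦ 0`, `x_j ↦ x_{j-1}` for `j > i+1`. -/
def BS (i : ℕ) : Pol →ₐ[ℤ] Pol :=
  aeval fun j => if j < i then X j else if j = i then 0 else X (j-1)

/-- `m`-fold iterate of `BS i`. -/
def BSit (i m : ℕ) (f : Pol) : Pol := (fun g => BS i g)^[m] f

/-- `Z g = Σ_{k ≥ 0} R₁ᵏ g`. -/
def Zop (f : Pol) : Pol := ∑ᶠ k : ℕ, BSit 0 k f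

/-- `Z^{(m)} g = Σ_{k ≥ 0} R₁^{km} g`. -/
def Zm (m : ℕ) (f : Pol) : Pol := ∑ᶠ k : ℕ, BSit 0 (k * m) f

/-- The truncation operator keeping the first `n` variables: `Π_n` in paper indexing. -/
def truncOp (n : ℕ) : Pol →ₐ[ℤ] Pol := aeval fun j => if j < n then X j else 0

/-- The quasisymmetric divided difference `T_{i+1}` defined as the exact quotient
`((R_{i+2} - R_{i+1})f)/x_{i+1}` (paper indexing). -/
def TqDiv (i : ℕ) (f : Pol) : Pol := exactDiv (X i) (BS (i+1) f - BS i f)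

/-- The quasisymmetric divided difference `T_{i+1} = R_{i+1} ∘ ∂_{i+1}` (paper indexing). -/
def Tq (i : ℕ) (f : Pol) : Pol := BS i (ddiff i f)

/-- The `m`-quasisymmetric divided difference `T^{(m)}_{i+1}` (paper indexing). -/
def Tm (m i : ℕ) (f : Pol) : Pol := exactDiv (X i) (BSit (i+1) m f - BSit i m f)

/-- The slide extractor `D_{i+1} = Π_{i+1} ∘ ∂_{i+1}` (paper indexing). -/
def Dop (i : ℕ) (f : Pol) : Pol := truncOp (i+1) (ddiff i f)

/-- The `m`-slide extractor `D^{(m)}_{i+1} = Π_{i+1} ∘ T^{(m)}_{i+1}` (paper indexing). -/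
def Dm (m i : ℕ) (f : Pol) : Pol := truncOp (i+1) (Tm m i f)

/-- The slide creator `B_{i+1} f = Σ_{k=1}^{i+1} x_k · R_k^{i+1-k}(Π_{i+1} f)` (paper indexing). -/
def Bop (i : ℕ) (f : Pol) : Pol :=
  ∑ k ∈ Finset.range (i+1), X k * BSit k (i - k) (truncOp (i+1) f)

/-- The creation operator `Z ∘ x_{i+1} ∘ R_{i+1}` (paper indexing). -/
def crea (i : ℕ) (f : Pol) : Pol := Zop (X i * BS i f)

/-- A permutation of `{0,1,2,…}` is finitely supported if it fixes all but
finitely many points. -/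
def FinSupp (w : Equiv.Perm ℕ) : Prop := Set.Finite {x | w x ≠ x}

/-- Coxeter length: the minimal `k` such that `w` is a product of `k` simple
transpositions. -/
def len (w : Equiv.Perm ℕ) : ℕ :=
  sInf {k | ∃ l : List ℕ, l.length = k ∧ (l.map fun i => Equiv.swap i (i+1)).prod = w}

/-- The set of reduced words for `w`. -/
def Red (w : Equiv.Perm ℕ) : Set (List ℕ) :=
  {l | l.length = len w ∧ (l.map fun i => Equiv.swap i (i+1)).prod = w}

/-- A family of polynomials indexed by permutations is a family of Schubert
polynomials if: each member is homogeneous of degree the length, the identity is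
sent to `1`, and divided differences act as expected (all this for finitely
supported permutations). -/
def IsSchubertFamily (S : Equiv.Perm ℕ → Pol) : Prop :=
  (∀ w, FinSupp w → (S w).IsHomogeneous (len w)) ∧
  S 1 = 1 ∧
  ∀ w, FinSupp w → ∀ i : ℕ,
    ddiff i (S w) = if w (i+1) < w i then S (w * Equiv.swap i (i+1)) else 0

/-- `b` is a compatible sequence for `a`. -/
def Compat {k : ℕ} (a b : Fin k → ℕ) : Prop :=
  Monotone b ∧ (∀ j, b j ≤ a j) ∧
  ∀ (j : ℕ) (h : j + 1 < k),
    a ⟨j, Nat.lt_of_succ_lt h⟩ < a ⟨j+1, h⟩ → b ⟨j, Nat.lt_of_succ_lt h⟩ < b ⟨j+1, h⟩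

/-- The slide polynomial `𝔉_a`, as the sum of the monomials of all compatible
sequences for `a`. -/
def slide {k : ℕ} (a : Fin k → ℕ) : Pol :=
  ∑ᶠ b ∈ {b : Fin k → ℕ | Compat a b}, ∏ j, X (b j)

/-- `b` is an `m`-compatible sequence for `a` (entrywise congruent mod `m`). -/
def MCompat (m : ℕ) {k : ℕ} (a b : Fin k → ℕ) : Prop :=
  Monotone b ∧ (∀ j, b j ≤ a j ∧ b j % m = a j % m) ∧
  ∀ (j : ℕ) (h : j + 1 < k),
    a ⟨j, Nat.lt_of_succ_lt h⟩ < a ⟨j+1, h⟩ → b ⟨j, Nat.lt_of_succ_lt h⟩ < b ⟨j+1, h⟩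

/-- The `m`-slide polynomial `𝔉ᵐ_a`. -/
def mslide (m : ℕ) {k : ℕ} (a : Fin k → ℕ) : Pol :=
  ∑ᶠ b ∈ {b : Fin k → ℕ | MCompat m a b}, ∏ j, X (b j)

/-- Value of the `m`-slide creator `B^{(m)}_{a+1}` (paper indexing) on the monomial with
exponent vector `d`. -/
def BmMono (m a : ℕ) (d : ℕ →₀ ℕ) : Pol :=
  if ∃ t, a < t ∧ d t ≠ 0 then 0
  else monomial (d.erase a) 1 *
    ∑ r ∈ Finset.range (a+1),
      if r * m ≤ a ∧ ∀ t, t < a → d t ≠ 0 → t < a - r * m then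
        X (a - r * m) ^ (d a + 1) else 0

/-- The `m`-slide creator `B^{(m)}_{a+1}` (paper indexing), extended linearly from
its values on monomials. -/
def Bm (m a : ℕ) (f : Pol) : Pol := ∑ d ∈ f.support, C (f.coeff d) * BmMono m a d

end

section auxlemmas

open Finset

lemma exactDiv_eq {d f g : Pol} (hd : d ≠ 0) (h : d * g = f) : exactDiv d f = g := by
  have hex : ∃ g : Pol, d * g = f := ⟨g, h⟩
  rw [exactDiv, dif_pos hex]
  exact mul_left_cancel₀ hd (by rw [hex.choose_spec, h])

lemma dvd_sub_swapVar (i : ℕ) (f : Pol) : (X i - X (i+1) : Pol) ∣ f - swapVar i f := by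
  induction f using MvPolynomial.induction_on with
  | C a => simp [swapVar]
  | add f g hf hg =>
      have : swapVar i (f + g) = swapVar i f + swapVar i g := by simp [swapVar]
      rw [this]
      have h2 : f + g - (swapVar i f + swapVar i g) = (f - swapVar i f) + (g - swapVar i g) := by
        ring
      rw [h2]; exact dvd_add hf hg
  | mul_X f v hf =>
      have h1 : swapVar i (f * X v) = swapVar i f * X (Equiv.swap i (i+1) v) := by
        simp [swapVar]
      rw [h1]
      have key : f * X v - swapVar i f * X (Equiv.swap i (i+1) v)
          = (f - swapVar i f) * X v
            + swapVar i f * (X v - X (Equiv.swap i (i+1) v)) := by ring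
      rw [key]
      refine dvd_add (hf.mul_right _) (Dvd.dvd.mul_left ?_ _)
      by_cases hvi : v = i
      · rw [hvi, Equiv.swap_apply_left]
      · by_cases hvi1 : v = i+1
        · subst hvi1
          rw [Equiv.swap_apply_right]
          have : (X (i+1) - X i : Pol) = -(X i - X (i+1)) := by ring
          rw [this]
          exact dvd_neg.mpr dvd_rfl
        · rw [Equiv.swap_apply_of_ne_of_ne hvi hvi1, sub_self]
          exact dvd_zero _

lemma X_sub_X_ne_zero (i : ℕ) : (X i - X (i+1) : Pol) ≠ 0 := by
  refine sub_ne_zero.mpr fun h => ?_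
  have := MvPolynomial.X_injective (R := ℤ) h
  omega

lemma ddiff_spec (i : ℕ) (f : Pol) :
    (X i - X (i+1) : Pol) * ddiff i f = f - swapVar i f := by
  obtain ⟨g, hg⟩ := dvd_sub_swapVar i f
  rw [ddiff, exactDiv_eq (X_sub_X_ne_zero i) hg.symm, ← hg]

lemma truncOp_X (n v : ℕ) : truncOp n (X v : Pol) = if v < n then X v else 0 := by
  simp [truncOp]

lemma Dop_eq {i : ℕ} {f g : Pol}
    (h : X i * g = truncOp (i+1) f - truncOp (i+1) (swapVar i f)) : Dop i f = g := by
  have h1 := congrArg (truncOp (i+1)) (ddiff_spec i f)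
  rw [map_mul, map_sub, map_sub, truncOp_X, truncOp_X, if_pos (Nat.lt_succ_self i),
    if_neg (lt_irrefl (i+1)), sub_zero] at h1
  exact mul_left_cancel₀ (MvPolynomial.X_ne_zero i) (h1.trans h.symm)

lemma compat_finite {k : ℕ} (a : Fin k → ℕ) : {c : Fin k → ℕ | Compat a c}.Finite := by
  apply (Set.finite_Icc (fun _ => 0) a).subset
  intro c hc
  exact Set.mem_Icc.mpr ⟨fun j => Nat.zero_le _, hc.2.1⟩

lemma slide_eq_sum {k : ℕ} (a : Fin k → ℕ) :
    slide a = ∑ c ∈ (compat_finite a).toFinset, ∏ j, (X (c j) : Pol) :=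
  finsum_mem_eq_finite_toFinset_sum _ (compat_finite a)

lemma prod_ite_eq' {k : ℕ} (p : Fin k → Prop) [DecidablePred p] (g : Fin k → ℕ) :
    (∏ j, if p j then (X (g j) : Pol) else 0) =
      if ∀ j, p j then ∏ j, (X (g j) : Pol) else 0 := by
  by_cases h : ∀ j, p j
  · rw [if_pos h]; exact Finset.prod_congr rfl fun j _ => if_pos (h j)
  · rw [if_neg h]
    push_neg at h
    obtain ⟨j, hj⟩ := h
    exact Finset.prod_eq_zero (Finset.mem_univ j) (if_neg hj)

lemma truncOp_prod_X {k n : ℕ} (c : Fin k → ℕ) :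
    truncOp n (∏ j, (X (c j) : Pol)) =
      if ∀ j, c j < n then ∏ j, (X (c j) : Pol) else 0 := by
  rw [map_prod, Finset.prod_congr rfl (fun j _ => truncOp_X n (c j))]
  exact prod_ite_eq' _ _

lemma truncSwap_X (i v : ℕ) :
    truncOp (i+1) (swapVar i (X v)) = if v = i+1 then X i else if v < i then X v else 0 := by
  have hs : swapVar i (X v : Pol) = X (Equiv.swap i (i+1) v) := rename_X _ _
  rw [hs]
  by_cases hvi : v = i
  · subst hvi
    rw [Equiv.swap_apply_left, truncOp_X, if_neg (lt_irrefl (v+1)),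
      if_neg (show ¬ (v = v + 1) by omega), if_neg (lt_irrefl v)]
  · by_cases hvi1 : v = i+1
    · subst hvi1
      rw [Equiv.swap_apply_right, truncOp_X, if_pos (Nat.lt_succ_self i), if_pos rfl]
    · rw [Equiv.swap_apply_of_ne_of_ne hvi hvi1, truncOp_X, if_neg hvi1]
      by_cases hv : v < i
      · rw [if_pos (by omega), if_pos hv]
      · rw [if_neg (by omega), if_neg hv]

lemma truncSwap_prod_X {k : ℕ} (i : ℕ) (c : Fin k → ℕ) :
    truncOp (i+1) (swapVar i (∏ j, (X (c j) : Pol))) =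
      if ∀ j, (c j = i+1 ∨ c j < i) then
        ∏ j, (X (if c j = i+1 then i else c j) : Pol) else 0 := by
  have h1 : swapVar i (∏ j, (X (c j) : Pol)) = ∏ j, swapVar i (X (c j) : Pol) := by
    simp [swapVar]
  rw [h1, map_prod, Finset.prod_congr rfl (fun j _ => truncSwap_X i (c j))]
  have h2 : ∀ j : Fin k,
      (if c j = i+1 then (X i : Pol) else if c j < i then X (c j) else 0)
        = if (c j = i+1 ∨ c j < i) then (X (if c j = i+1 then i else c j) : Pol) else 0 := by
    intro j
    by_cases h : c j = i + 1
    · rw [if_pos h, if_pos (Or.inl h), if_pos h]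
    · rw [if_neg h]
      by_cases h' : c j < i
      · rw [if_pos h', if_pos (Or.inr h'), if_neg h]
      · rw [if_neg h', if_neg (by tauto)]
  rw [Finset.prod_congr rfl (fun j _ => h2 j)]
  exact prod_ite_eq' _ _

lemma const_from {k i : ℕ} {b c : Fin (k+1) → ℕ} (hb : Monotone b) (hc : Compat b c)
    (hci : ∀ j, c j < i + 1) (j0 : Fin (k+1)) (h0c : c j0 = i) (h0b : b j0 = i) :
    b (Fin.last k) = i ∧ c (Fin.last k) = i := by
  suffices H : ∀ t, ∀ h : j0.val + t ≤ k,
      b ⟨j0.val + t, by omega⟩ = i ∧ c ⟨j0.val + t, by omega⟩ = i by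
    have hj0 : j0.val ≤ k := Nat.lt_succ_iff.mp j0.isLt
    have := H (k - j0.val) (by omega)
    have hlast : (⟨j0.val + (k - j0.val), by omega⟩ : Fin (k+1)) = Fin.last k := by
      apply Fin.ext; simp [Fin.last]; omega
    rwa [hlast] at this
  intro t
  induction t with
  | zero =>
      intro h
      have he : (⟨j0.val + 0, by omega⟩ : Fin (k+1)) = j0 := Fin.ext (by simp)
      rw [he]; exact ⟨h0b, h0c⟩
  | succ t ih =>
      intro h
      show b ⟨j0.val + t + 1, by omega⟩ = i ∧ c ⟨j0.val + t + 1, by omega⟩ = i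
      obtain ⟨hbt, hct⟩ := ih (by omega)
      have hmono : c ⟨j0.val + t, by omega⟩ ≤ c ⟨j0.val + t + 1, by omega⟩ :=
        hc.1 (by simp [Fin.le_def])
      have hbound := hci ⟨j0.val + t + 1, by omega⟩
      have hc' : c ⟨j0.val + t + 1, by omega⟩ = i := by omega
      refine ⟨?_, hc'⟩
      by_contra hne
      have hble : b ⟨j0.val + t, by omega⟩ ≤ b ⟨j0.val + t + 1, by omega⟩ :=
        hb (by simp [Fin.le_def])
      have hblt : b ⟨j0.val + t, Nat.lt_of_succ_lt (by omega)⟩ < b ⟨j0.val + t + 1, by omega⟩ := by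
        omega
      have := hc.2.2 (j0.val + t) (by omega) hblt
      omega

end auxlemmas

section compatlemmas

lemma compat_lower {k i : ℕ} {b c : Fin k → ℕ} (hc : Compat b c)
    (h2 : ∀ j, c j = i+1 ∨ c j < i) :
    Compat b (fun j => if c j = i+1 then i else c j) := by
  obtain ⟨hmono, hle, hasc⟩ := hc
  refine ⟨?_, ?_, ?_⟩
  · intro j j' hjj'
    have h1 := hmono hjj'
    have h2j := h2 j; have h2j' := h2 j'
    dsimp only
    split_ifs <;> omega
  · intro j
    have := hle j; have := h2 j
    dsimp only
    split_ifs <;> omega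
  · intro j h hab
    have ha := hasc j h hab
    have h2j := h2 ⟨j, Nat.lt_of_succ_lt h⟩
    have h2j' := h2 ⟨j+1, h⟩
    dsimp only
    split_ifs <;> omega

lemma compat_lift {k i : ℕ} {b d : Fin k → ℕ} (hd : Compat b d)
    (h1 : ∀ j, d j < i + 1) (hq : ∀ j, d j = i → i < b j) :
    Compat b (fun j => if d j = i then i+1 else d j) := by
  obtain ⟨hmono, hle, hasc⟩ := hd
  refine ⟨?_, ?_, ?_⟩
  · intro j j' hjj'
    have := hmono hjj'; have := h1 j; have := h1 j'
    dsimp only; split_ifs <;> omega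
  · intro j
    dsimp only
    split_ifs with hh
    · have := hq j hh; omega
    · exact hle j
  · intro j h hab
    have ha := hasc j h hab
    have := h1 ⟨j, Nat.lt_of_succ_lt h⟩
    have := h1 ⟨j+1, h⟩
    dsimp only; split_ifs <;> omega

lemma compat_restrict {k : ℕ} {b c : Fin (k+1) → ℕ} (hc : Compat b c) :
    Compat (b ∘ Fin.castSucc) (c ∘ Fin.castSucc) := by
  obtain ⟨hmono, hle, hasc⟩ := hc
  refine ⟨?_, fun j => hle _, ?_⟩
  · intro x y hxy
    exact hmono (Fin.castSucc_le_castSucc_iff.mpr hxy)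
  · intro j h hab
    exact hasc j (by omega) hab

lemma snoc_apply {k : ℕ} (e : Fin k → ℕ) (x : ℕ) (j : Fin (k+1)) :
    (Fin.snoc (α := fun _ => ℕ) e x j : ℕ) = if h : j.val < k then e ⟨j.val, h⟩ else x := by
  induction j using Fin.lastCases with
  | last => rw [Fin.snoc_last, dif_neg (by simp)]
  | cast m =>
      have hm : ((Fin.castSucc m).val) < k := by simpa using m.isLt
      rw [Fin.snoc_castSucc, dif_pos hm]
      exact congrArg e (Fin.ext rfl)

lemma snoc_mk {k : ℕ} (e : Fin k → ℕ) (x j : ℕ) (hj : j < k+1) :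
    (Fin.snoc (α := fun _ => ℕ) e x ⟨j, hj⟩ : ℕ) = if h : j < k then e ⟨j, h⟩ else x :=
  snoc_apply e x ⟨j, hj⟩

lemma compat_snoc {k i : ℕ} {b : Fin (k+1) → ℕ} {e : Fin k → ℕ} (hb : Monotone b)
    (hi : b (Fin.last k) = i) (he : Compat (b ∘ Fin.castSucc) e) :
    Compat b (Fin.snoc e i) := by
  obtain ⟨hmono, hle, hasc⟩ := he
  have hlei : ∀ j : Fin k, e j ≤ i := fun j =>
    le_trans (hle j) (hi ▸ hb (Fin.le_last _))
  refine ⟨?_, ?_, ?_⟩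
  · intro x y hxy
    rw [snoc_apply, snoc_apply]
    have hv : x.val ≤ y.val := hxy
    split_ifs with h1 h2 h2
    · exact hmono (Fin.mk_le_mk.mpr hv)
    · exact hlei _
    · exfalso; omega
    · exact le_refl i
  · intro j
    rw [snoc_apply]
    split_ifs with h
    · have h2 : Fin.castSucc (⟨j.val, h⟩ : Fin k) = j := Fin.ext rfl
      have := hle ⟨j.val, h⟩
      rwa [Function.comp_apply, h2] at this
    · have hk := j.isLt
      have hj : j = Fin.last k := by
        apply Fin.ext
        rw [Fin.val_last]
        omega
      rw [hj]
      exact le_of_eq hi.symm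
  · intro j h hab
    rw [snoc_mk, snoc_mk]
    split_ifs with h1 h2
    · exact hasc j h2 hab
    · -- j < k, j+1 = k : target e ⟨j,h1⟩ < i
      have hje := hle ⟨j, h1⟩
      have hcb : (b ∘ Fin.castSucc) ⟨j, h1⟩ = b ⟨j, Nat.lt_of_succ_lt h⟩ := rfl
      rw [hcb] at hje
      have hble : b ⟨j+1, h⟩ ≤ b (Fin.last k) := hb (Fin.le_last _)
      omega
    · exfalso; omega
    · exfalso; omega

end compatlemmas

/-- for a nonempty weakly increasing sequence `b`, the slide extractor
satisfies `D_i 𝔉_b = 𝔉_{b minus last entry}` if `i` is the last entry of `b`, else `0`. -/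
theorem stmt_8 {k : ℕ} (b : Fin (k+1) → ℕ) (hb : Monotone b) (i : ℕ) :
    Dop i (slide b) = if i = b (Fin.last k) then slide (b ∘ Fin.castSucc) else 0 := by
  classical
  set S : Finset (Fin (k+1) → ℕ) := (compat_finite b).toFinset with hS
  have hmemS : ∀ c, c ∈ S ↔ Compat b c := fun c => by
    rw [hS, Set.Finite.mem_toFinset]; rfl
  have ht1 : truncOp (i+1) (slide b)
      = ∑ c ∈ S.filter (fun c => ∀ j, c j < i+1), ∏ j, (X (c j) : Pol) := by
    rw [slide_eq_sum, map_sum, Finset.sum_congr rfl (fun c _ => truncOp_prod_X c),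
      ← Finset.sum_filter]
  have hswapsum : swapVar i (slide b) = ∑ c ∈ S, swapVar i (∏ j, (X (c j) : Pol)) := by
    rw [slide_eq_sum]
    simp only [swapVar]
    exact map_sum _ _ _
  have ht2 : truncOp (i+1) (swapVar i (slide b))
      = ∑ c ∈ S.filter (fun c => ∀ j, c j = i+1 ∨ c j < i),
          ∏ j, (X (if c j = i+1 then i else c j) : Pol) := by
    rw [hswapsum, map_sum, Finset.sum_congr rfl (fun c _ => truncSwap_prod_X i c),
      ← Finset.sum_filter]
  have hbij : ∑ c ∈ S.filter (fun c => ∀ j, c j = i+1 ∨ c j < i),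
        ∏ j, (X (if c j = i+1 then i else c j) : Pol)
      = ∑ d ∈ (S.filter (fun c => ∀ j, c j < i+1)).filter
            (fun c => ∀ j, c j = i → i < b j), ∏ j, (X (d j) : Pol) := by
    refine Finset.sum_nbij' (fun c => fun j => if c j = i+1 then i else c j)
      (fun d => fun j => if d j = i then i+1 else d j) ?_ ?_ ?_ ?_ ?_
    · intro c hc
      rw [Finset.mem_filter] at hc
      obtain ⟨hcS, h2⟩ := hc
      have hcompat := (hmemS c).mp hcS
      rw [Finset.mem_filter, Finset.mem_filter, hmemS]
      refine ⟨⟨compat_lower hcompat h2, ?_⟩, ?_⟩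
      · intro j; have := h2 j; dsimp only; split_ifs <;> omega
      · intro j hj
        have hle := hcompat.2.1 j
        have := h2 j
        dsimp only at hj
        split_ifs at hj <;> omega
    · intro d hd
      rw [Finset.mem_filter, Finset.mem_filter] at hd
      obtain ⟨⟨hdS, h1⟩, hq⟩ := hd
      have hcompat := (hmemS d).mp hdS
      rw [Finset.mem_filter, hmemS]
      refine ⟨compat_lift hcompat h1 hq, ?_⟩
      intro j
      have := h1 j; dsimp only; split_ifs <;> omega
    · intro c hc
      rw [Finset.mem_filter] at hc
      funext j
      have := hc.2 j
      dsimp only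
      split_ifs <;> omega
    · intro d hd
      rw [Finset.mem_filter, Finset.mem_filter] at hd
      funext j
      have := hd.1.2 j
      dsimp only
      split_ifs <;> omega
    · intro c _; rfl
  have hsplit := Finset.sum_filter_add_sum_filter_not
      (S.filter (fun c => ∀ j, c j < i+1)) (fun c => ∀ j, c j = i → i < b j)
      (fun c => ∏ j, (X (c j) : Pol))
  have hdiff : truncOp (i+1) (slide b) - truncOp (i+1) (swapVar i (slide b))
      = ∑ c ∈ (S.filter (fun c => ∀ j, c j < i+1)).filter
          (fun c => ¬ ∀ j, c j = i → i < b j), ∏ j, (X (c j) : Pol) := by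
    rw [ht1, ht2, hbij, ← hsplit]; ring
  by_cases hcase : i = b (Fin.last k)
  · rw [if_pos hcase]
    apply Dop_eq
    rw [hdiff]
    have hsets : ((S.filter (fun c => ∀ j, c j < i+1)).filter
        (fun c => ¬ ∀ j, c j = i → i < b j))
        = S.filter (fun c => c (Fin.last k) = i) := by
      ext c
      rw [Finset.mem_filter, Finset.mem_filter, Finset.mem_filter, hmemS]
      constructor
      · rintro ⟨⟨hcompat, h1⟩, hnot⟩
        push_neg at hnot
        obtain ⟨j, hcj, hbj⟩ := hnot
        have hble := hcompat.2.1 j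
        have hbj' : b j = i := by omega
        exact ⟨hcompat, (const_from hb hcompat h1 j hcj hbj').2⟩
      · rintro ⟨hcompat, hlast⟩
        refine ⟨⟨hcompat, ?_⟩, ?_⟩
        · intro j
          have h1 := hcompat.1 (Fin.le_last j)
          omega
        · push_neg
          exact ⟨Fin.last k, hlast, le_of_eq hcase.symm⟩
    rw [hsets]
    have hterm : ∀ c ∈ S.filter (fun c => c (Fin.last k) = i),
        (∏ j, (X (c j) : Pol)) = X i * ∏ j : Fin k, (X (c (Fin.castSucc j)) : Pol) := by
      intro c hc
      rw [Finset.mem_filter] at hc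
      rw [Fin.prod_univ_castSucc, hc.2, mul_comm]
    have hfinal : ∑ c ∈ S.filter (fun c => c (Fin.last k) = i),
        ∏ j : Fin k, (X (c (Fin.castSucc j)) : Pol)
        = slide (b ∘ Fin.castSucc) := by
      rw [slide_eq_sum]
      refine Finset.sum_nbij' (fun c => c ∘ Fin.castSucc) (fun e => Fin.snoc e i) ?_ ?_ ?_ ?_ ?_
      · intro c hc
        rw [Finset.mem_filter, hmemS] at hc
        rw [Set.Finite.mem_toFinset]
        exact compat_restrict hc.1
      · intro e he
        rw [Set.Finite.mem_toFinset] at he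
        rw [Finset.mem_filter, hmemS]
        exact ⟨compat_snoc hb hcase.symm he, Fin.snoc_last _ _⟩
      · intro c hc
        rw [Finset.mem_filter] at hc
        funext j
        show (Fin.snoc (α := fun _ => ℕ) (c ∘ Fin.castSucc) i j : ℕ) = c j
        induction j using Fin.lastCases with
        | last => rw [Fin.snoc_last, hc.2]
        | cast m => rw [Fin.snoc_castSucc]; rfl
      · intro e _
        funext j
        show (Fin.snoc (α := fun _ => ℕ) e i (Fin.castSucc j) : ℕ) = e j
        rw [Fin.snoc_castSucc]
      · intro c _; rfl
    rw [Finset.sum_congr rfl hterm, ← Finset.mul_sum, hfinal]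
  · rw [if_neg hcase]
    apply Dop_eq
    rw [hdiff]
    have hempty : ((S.filter (fun c => ∀ j, c j < i+1)).filter
        (fun c => ¬ ∀ j, c j = i → i < b j)) = ∅ := by
      rw [Finset.filter_eq_empty_iff]
      intro c hc hnot
      rw [Finset.mem_filter, hmemS] at hc
      push_neg at hnot
      obtain ⟨j, hcj, hbj⟩ := hnot
      have hble := hc.1.2.1 j
      have hbj' : b j = i := by omega
      exact hcase ((const_from hb hc.1 hc.2 j hcj hbj').1).symm
    rw [hempty, Finset.sum_empty, mul_zero]
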